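/- Let d ≥ 1 and let ν be a probability measure on [0,∞)^{E^d} (with the product σ-algebra), invariant under all translations of ℤ^d, which has unique passage times in the weak sense that ν(t_e = t_f) = 0 for every pair of distinct edges e ≠ f in E^d. Then the marginal distribution of every edge weight is continuous: for every edge e ∈ E^d and every a ∈ [0,∞), ν(t_e = a) = 0. -/

import Mathlib

open MeasureTheory
open scoped NNReal

/-- Vertices of the `d`-dimensional lattice. -/
abbrev Vtx (d : ℕ) := Fin d → ℤ

/-- ℓ¹-distance on `ℤ^d`. -/
def dist1 {d : ℕ} (x y : Vtx d) : ℤ := ∑ i, |x i - y i|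

/-- A nonnegative weight configuration on the (unordered) nearest-neighbor edges
of `ℤ^d` (values at non-edges are irrelevant). -/
abbrev WConfig (d : ℕ) := Sym2 (Vtx d) → ℝ≥0

/-- Translation of a weight configuration by `z`. -/
def shiftW {d : ℕ} (z : Vtx d) (t : WConfig d) : WConfig d :=
  fun e => t (e.map (· + z))

/-- a translation-invariant probability measure on edge-weight
configurations with weakly unique passage times (`ν(t_e = t_f) = 0` for distinct edges
`e ≠ f`) has continuous marginals: `ν(t_e = a) = 0` for every edge `e` and `a ≥ 0`. -/
theorem stmt12 (d : ℕ) (hd : 1 ≤ d)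
    (ν : Measure (WConfig d)) [IsProbabilityMeasure ν]
    (hinv : ∀ z : Vtx d, MeasurePreserving (shiftW z) ν ν)
    (huniq : ∀ x y u v : Vtx d, dist1 x y = 1 → dist1 u v = 1 → s(x, y) ≠ s(u, v) →
      ν {t : WConfig d | t s(x, y) = t s(u, v)} = 0) :
    ∀ x y : Vtx d, dist1 x y = 1 → ∀ a : ℝ≥0, ν {t : WConfig d | t s(x, y) = a} = 0 := by
  intro x y hxy a
  by_contra hc
  -- unit vector
  set i0 : Fin d := ⟨0, hd⟩
  set u : Vtx d := Pi.single i0 1 with hu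
  -- translated edge events
  set A : ℕ → Set (WConfig d) := fun n => {t | t s(x + n • u, y + n • u) = a} with hA
  -- each edge at ℓ¹-distance 1
  have hdist : ∀ n : ℕ, dist1 (x + n • u) (y + n • u) = 1 := by
    intro n
    simpa [dist1, Pi.add_apply] using hxy
  -- measurability
  have hmeas : ∀ e : Sym2 (Vtx d), Measurable fun t : WConfig d => t e := fun e =>
    measurable_pi_apply e
  have hAmeas : ∀ n, MeasurableSet (A n) := by
    intro n
    exact (hmeas _) (measurableSet_singleton a)
  -- translates have the same measure
  have hsame : ∀ n : ℕ, ν (A n) = ν (A 0) := by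
    intro n
    have h := (hinv ((n : ℤ) • u)).measure_preimage ((hAmeas 0).nullMeasurableSet)
    have hpre : shiftW ((n : ℤ) • u) ⁻¹' (A 0) = A n := by
      ext t
      simp only [Set.mem_preimage, hA, Set.mem_setOf_eq, shiftW, Sym2.map_pair_eq]
      constructor <;> intro h <;> simpa using h
    rw [hpre] at h
    simpa using h
  -- edges distinct
  have key : ∀ (w : Vtx d) (k : ℕ), (w + k • u) i0 = w i0 + k := by
    intro w k
    simp [hu, Pi.single_eq_same]
  have hedge : ∀ m n : ℕ, m ≠ n →
      s(x + m • u, y + m • u) ≠ s(x + n • u, y + n • u) := by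
    intro m n hmn h
    rw [Sym2.eq_iff] at h
    rcases h with ⟨h1, h2⟩ | ⟨h1, h2⟩
    · have e1 := congrFun h1 i0
      rw [key, key] at e1
      exact hmn (by omega)
    · have e1 := congrFun h1 i0
      have e2 := congrFun h2 i0
      rw [key, key] at e1 e2
      exact hmn (by omega)
  -- a.e. disjoint
  have hdisj : Pairwise (Function.onFun (AEDisjoint ν) A) := by
    intro m n hmn
    have hsub : A m ∩ A n ⊆
        {t : WConfig d | t s(x + m • u, y + m • u) = t s(x + n • u, y + n • u)} := by
      rintro t ⟨h1, h2⟩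
      simp only [hA, Set.mem_setOf_eq] at h1 h2 ⊢
      rw [h1, h2]
    exact measure_mono_null hsub (huniq _ _ _ _ (hdist m) (hdist n) (hedge m n hmn))
  have hle : ∑' n : ℕ, ν (A n) ≤ ν Set.univ :=
    tsum_measure_le_measure_univ (fun n => (hAmeas n).nullMeasurableSet) hdisj
  have h0 : ν (A 0) ≠ 0 := by
    simpa only [hA, zero_smul, add_zero] using hc
  have htop : ∑' n : ℕ, ν (A n) = ⊤ := by
    rw [tsum_congr hsame]
    exact ENNReal.tsum_const_eq_top_of_ne_zero h0
  rw [htop, measure_univ] at hle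
  exact (by simp : ¬ (⊤ : ENNReal) ≤ 1) hle
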